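/- Let r be a nonnegative integer, and let G be a τ-critical graph with τ(G) = t ≥ r and |V(G)| = n. Let q₁ denote the largest eigenvalue of the signless Laplacian matrix Q(G) = D(G) + A(G) of G. Then n·(r + q₁/4) ≤ (t+r+1 choose 2). -/

import Mathlib

open SimpleGraph

variable {V : Type*}

/-- A transversal set (vertex cover): a set of vertices incident to all edges. -/
def IsTransversal (G : SimpleGraph V) (T : Finset V) : Prop :=
  ∀ ⦃u v : V⦄, G.Adj u v → u ∈ T ∨ v ∈ T

/-- The transversal number `τ(G)`: minimum cardinality of a transversal set. -/
noncomputable def tauNum (G : SimpleGraph V) [Fintype V] : ℕ :=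
  sInf {k | ∃ T : Finset V, T.card = k ∧ IsTransversal G T}

/-- `G` is τ-critical: it has no isolated vertex and deleting any edge decreases `τ`. -/
def IsTauCritical (G : SimpleGraph V) [Fintype V] : Prop :=
  (∀ v : V, ∃ u, G.Adj v u) ∧
    ∀ e ∈ G.edgeSet, tauNum (G.deleteEdges {e}) < tauNum G

/-- `mK2 m` is the disjoint union of `m` copies of `K₂`. -/
def mK2 (m : ℕ) : SimpleGraph (Fin m × Fin 2) where
  Adj x y := x.1 = y.1 ∧ x.2 ≠ y.2
  symm := ⟨fun _ _ ⟨h1, h2⟩ => ⟨h1.symm, h2.symm⟩⟩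
  loopless := ⟨fun _ ⟨_, h⟩ => h rfl⟩

/-- The spectral radius `λ₁(G)`: the largest eigenvalue of the adjacency matrix of `G`. -/
noncomputable def specRad (G : SimpleGraph V) [Fintype V] [DecidableEq V]
    [DecidableRel G.Adj] : ℝ :=
  sSup (spectrum ℝ (G.adjMatrix ℝ))

/-- The signless Laplacian spectral radius `q₁(G)`: the largest eigenvalue of
`Q(G) = D(G) + A(G)`. -/
noncomputable def signlessLapSpecRad (G : SimpleGraph V) [Fintype V] [DecidableEq V]
    [DecidableRel G.Adj] : ℝ :=
  sSup (spectrum ℝ (Matrix.diagonal (fun v => (G.degree v : ℝ)) + G.adjMatrix ℝ))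

section aux
set_option linter.unusedSectionVars false
set_option linter.unusedVariables false
open Finset
section basics


variable (G : SimpleGraph V) [Fintype V] [DecidableEq V]

lemma tauNum_set_nonempty : {k | ∃ T : Finset V, T.card = k ∧ IsTransversal G T}.Nonempty :=
  ⟨(univ : Finset V).card, univ, rfl, fun u _ _ => Or.inl (mem_univ u)⟩

lemma exists_min_transversal : ∃ T : Finset V, T.card = tauNum G ∧ IsTransversal G T :=
  Nat.sInf_mem (tauNum_set_nonempty G)

lemma tauNum_le {T : Finset V} (h : IsTransversal G T) : tauNum G ≤ T.card :=
  Nat.sInf_le ⟨T, rfl, h⟩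

lemma crit_edge (hcrit : IsTauCritical G) {u v : V} (huv : G.Adj u v) :
    ∃ R : Finset V, R.card < tauNum G ∧ u ∉ R ∧ v ∉ R ∧
      ∀ ⦃a b : V⦄, G.Adj a b → s(a, b) ≠ s(u, v) → (a ∈ R ∨ b ∈ R) := by
  have htau := hcrit.2 s(u, v) (G.mem_edgeSet.mpr huv)
  obtain ⟨R, hcard, hR⟩ := exists_min_transversal (G.deleteEdges {s(u, v)})
  have hcov : ∀ ⦃a b : V⦄, G.Adj a b → s(a, b) ≠ s(u, v) → (a ∈ R ∨ b ∈ R) := by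
    intro a b hab hne
    exact hR (by rw [SimpleGraph.deleteEdges_adj]; exact ⟨hab, by simpa using hne⟩)
  have hful : ∀ x ∈ R, False → True := fun _ _ _ => trivial
  have hnotu : u ∉ R := by
    intro hu
    have : IsTransversal G R := by
      intro a b hab
      by_cases hne : s(a, b) = s(u, v)
      · rcases Sym2.eq_iff.mp hne with ⟨rfl, rfl⟩ | ⟨rfl, rfl⟩
        · exact Or.inl hu
        · exact Or.inr hu
      · exact hcov hab hne
    have := tauNum_le G this
    omega
  have hnotv : v ∉ R := by
    intro hv
    have : IsTransversal G R := by
      intro a b hab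
      by_cases hne : s(a, b) = s(u, v)
      · rcases Sym2.eq_iff.mp hne with ⟨rfl, rfl⟩ | ⟨rfl, rfl⟩
        · exact Or.inr hv
        · exact Or.inl hv
      · exact hcov hab hne
    have := tauNum_le G this
    omega
  exact ⟨R, by omega, hnotu, hnotv, hcov⟩

end basics

section cruxsec

variable (G : SimpleGraph V) [Fintype V] [DecidableEq V] [DecidableRel G.Adj]

lemma crux_matching (v : V) (S : Finset V) (s₀ : V) (hs₀ : s₀ ∈ S)
    (hIH : ∀ T ⊂ S, (∀ a ∈ T, ∀ b ∈ T, ¬ G.Adj a b) → (∀ a ∈ T, ¬ G.Adj v a) → v ∉ T →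
      T.card ≤ ((T.biUnion (fun a => G.neighborFinset a)) \ G.neighborFinset v).card)
    (hind : ∀ a ∈ S, ∀ b ∈ S, ¬ G.Adj a b) (hvS : ∀ a ∈ S, ¬ G.Adj v a) (hvnS : v ∉ S)
    (hYsmall : ((S.biUnion (fun a => G.neighborFinset a)) \ G.neighborFinset v).card < S.card) :
    ∃ f : {x // x ∈ S.erase s₀} → V, Function.Injective f ∧
      (∀ a, G.Adj a.1 (f a)) ∧
      (∀ a, f a ∈ (S.biUnion (fun a => G.neighborFinset a)) \ G.neighborFinset v) ∧
      (∀ y ∈ (S.biUnion (fun a => G.neighborFinset a)) \ G.neighborFinset v, ∃ a, f a = y) := by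
  classical
  have hall : ∀ (A' : Finset {x // x ∈ S.erase s₀}),
      A'.card ≤ (A'.biUnion (fun a => G.neighborFinset a.1 \ G.neighborFinset v)).card := by
    intro A'
    set S' : Finset V := A'.image (fun a => a.1) with hS'
    have hS'sub : S' ⊆ S.erase s₀ := by
      intro x hx
      obtain ⟨a, _, rfl⟩ := Finset.mem_image.mp hx
      exact a.2
    have hS'S : ∀ x ∈ S', x ∈ S := fun x hx => Finset.mem_of_mem_erase (hS'sub hx)
    have hproper : S' ⊂ S :=
      Finset.ssubset_of_subset_of_ssubset hS'sub (Finset.erase_ssubset hs₀)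
    have hcard : S'.card = A'.card :=
      Finset.card_image_of_injective _ (fun a b h => Subtype.ext h)
    have h1 := hIH S' hproper (fun a ha b hb => hind a (hS'S a ha) b (hS'S b hb))
      (fun a ha => hvS a (hS'S a ha)) (fun hv => hvnS (hS'S v hv))
    have heq : (S'.biUnion (fun a => G.neighborFinset a)) \ G.neighborFinset v
        = A'.biUnion (fun a => G.neighborFinset a.1 \ G.neighborFinset v) := by
      ext z
      simp only [Finset.mem_sdiff, Finset.mem_biUnion, Finset.mem_image, hS']
      constructor
      · rintro ⟨⟨x, ⟨a, haA, rfl⟩, hz⟩, hzv⟩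
        exact ⟨a, haA, hz, hzv⟩
      · rintro ⟨a, haA, hz, hzv⟩
        exact ⟨⟨a.1, ⟨a, haA, rfl⟩, hz⟩, hzv⟩
    rw [← heq]
    exact hcard ▸ h1
  obtain ⟨f, hfinj, hfmem⟩ := (Finset.all_card_le_biUnion_card_iff_exists_injective _).mp hall
  have hfadj : ∀ a, G.Adj a.1 (f a) := by
    intro a
    have := (Finset.mem_sdiff.mp (hfmem a)).1
    exact (G.mem_neighborFinset _ _).mp this
  have hfY : ∀ a, f a ∈ (S.biUnion (fun a => G.neighborFinset a)) \ G.neighborFinset v := by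
    intro a
    rcases Finset.mem_sdiff.mp (hfmem a) with ⟨h1, h2⟩
    exact Finset.mem_sdiff.mpr
      ⟨Finset.mem_biUnion.mpr ⟨a.1, Finset.mem_of_mem_erase a.2, h1⟩, h2⟩
  refine ⟨f, hfinj, hfadj, hfY, ?_⟩
  set Y := (S.biUnion (fun a => G.neighborFinset a)) \ G.neighborFinset v with hY
  set I : Finset V := Finset.univ.image f with hI
  have hIY : I ⊆ Y := by
    intro y hy
    obtain ⟨a, _, rfl⟩ := Finset.mem_image.mp hy
    exact hfY a
  have hIcard : I.card = (S.erase s₀).card := by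
    rw [hI, Finset.card_image_of_injective _ hfinj, Finset.card_univ, Fintype.card_coe]
  have hle : Y.card ≤ I.card := by
    have h2 : (S.erase s₀).card = S.card - 1 := Finset.card_erase_of_mem hs₀
    have h3 : 0 < S.card := Finset.card_pos.mpr ⟨s₀, hs₀⟩
    omega
  have hYI : Y = I := (Finset.eq_of_subset_of_card_le hIY hle).symm
  intro y hy
  obtain ⟨a, _, ha⟩ := Finset.mem_image.mp (hYI ▸ hy)
  exact ⟨a, ha⟩

end cruxsec

section cruxmain

variable (G : SimpleGraph V) [Fintype V] [DecidableEq V] [DecidableRel G.Adj]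

lemma crux (hcrit : IsTauCritical G) (v : V) :
    ∀ S : Finset V, (∀ a ∈ S, ∀ b ∈ S, ¬ G.Adj a b) → (∀ a ∈ S, ¬ G.Adj v a) → v ∉ S →
      S.card ≤ ((S.biUnion (fun a => G.neighborFinset a)) \ G.neighborFinset v).card := by
  classical
  intro S
  induction S using Finset.strongInduction with
  | _ S IH =>
  intro hind hvS hvnS
  by_contra hcon
  push_neg at hcon
  set NV := G.neighborFinset v with hNV
  set NS := S.biUnion (fun a => G.neighborFinset a) with hNS
  set Y := NS \ NV with hYdef
  -- hcon : Y.card < S.card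
  have hSNS : ∀ a ∈ S, a ∉ NS := by
    intro a ha hmem
    obtain ⟨b, hb, hab⟩ := Finset.mem_biUnion.mp hmem
    exact hind b hb a ha ((G.mem_neighborFinset _ _).mp hab)
  have hNvnotS : ∀ x, x ∈ NV → x ∉ S := by
    intro x hx hxS
    exact hvS x hxS ((G.mem_neighborFinset _ _).mp hx)
  have hSne : S.Nonempty := Finset.card_pos.mp (by omega)
  have hIH' : ∀ T ⊂ S, (∀ a ∈ T, ∀ b ∈ T, ¬ G.Adj a b) → (∀ a ∈ T, ¬ G.Adj v a) → v ∉ T →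
      T.card ≤ ((T.biUnion (fun a => G.neighborFinset a)) \ G.neighborFinset v).card := by
    intro T hT h1 h2 h3
    exact IH T hT h1 h2 h3
  by_cases hinter : ∀ x ∈ NS, x ∉ NV
  · -- CASE 1 : N(S) ∩ N(v) = ∅
    obtain ⟨s₀, hs₀S⟩ := hSne
    obtain ⟨y₀, hy₀⟩ := hcrit.1 s₀
    obtain ⟨f, hfinj, hfadj, hfY, hfsurj⟩ :=
      crux_matching G v S s₀ hs₀S hIH' hind hvS hvnS hcon
    obtain ⟨R, hRcard, -, -, hRcov⟩ := crit_edge G hcrit hy₀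
    set R' := (R ∪ NS) \ S with hR'
    have hy₀NS : y₀ ∈ NS := Finset.mem_biUnion.mpr
      ⟨s₀, hs₀S, (G.mem_neighborFinset _ _).mpr hy₀⟩
    have htrans : IsTransversal G R' := by
      intro a b hab
      by_cases haS : a ∈ S
      · refine Or.inr (Finset.mem_sdiff.mpr ⟨Finset.mem_union_right _
          (Finset.mem_biUnion.mpr ⟨a, haS, (G.mem_neighborFinset _ _).mpr hab⟩), ?_⟩)
        intro hbS
        exact hind a haS b hbS hab
      by_cases hbS : b ∈ S
      · refine Or.inl (Finset.mem_sdiff.mpr ⟨Finset.mem_union_right _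
          (Finset.mem_biUnion.mpr ⟨b, hbS, (G.mem_neighborFinset _ _).mpr hab.symm⟩), haS⟩)
      by_cases hne : s(a, b) = s(s₀, y₀)
      · rcases Sym2.eq_iff.mp hne with ⟨rfl, rfl⟩ | ⟨rfl, rfl⟩
        · exact absurd hs₀S haS
        · exact absurd hs₀S hbS
      · rcases hRcov hab hne with h | h
        · exact Or.inl (Finset.mem_sdiff.mpr ⟨Finset.mem_union_left _ h, haS⟩)
        · exact Or.inr (Finset.mem_sdiff.mpr ⟨Finset.mem_union_left _ h, hbS⟩)
    have hkey : (Y \ R).card ≤ (S ∩ R).card := by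
      set g : V → V := fun y => if h : ∃ a, f a = y then (Classical.choose h).1 else v with hg
      have hgspec : ∀ y ∈ Y \ R, ∃ a : {x // x ∈ S.erase s₀}, f a = y ∧ g y = a.1 := by
        intro y hy
        have hex : ∃ a, f a = y := hfsurj y (Finset.mem_sdiff.mp hy).1
        exact ⟨Classical.choose hex, Classical.choose_spec hex, by rw [hg]; simp [hex]⟩
      apply Finset.card_le_card_of_injOn g
      · intro y hy
        obtain ⟨a, hfa, hga⟩ := hgspec y hy
        rcases Finset.mem_sdiff.mp hy with ⟨hyY, hyR⟩
        have haS : a.1 ∈ S := Finset.mem_of_mem_erase a.2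
        have hadj : G.Adj a.1 y := hfa ▸ hfadj a
        have hne : s(a.1, y) ≠ s(s₀, y₀) := by
          intro he
          rcases Sym2.eq_iff.mp he with ⟨h1, h2⟩ | ⟨h1, h2⟩
          · exact (Finset.mem_erase.mp a.2).1 h1
          · exact hSNS a.1 haS (h1 ▸ hy₀NS)
        rcases hRcov hadj hne with h | h
        · rw [hga]; exact Finset.mem_inter.mpr ⟨haS, h⟩
        · exact absurd h hyR
      · intro y1 h1 y2 h2 he
        obtain ⟨a1, hfa1, hga1⟩ := hgspec y1 h1
        obtain ⟨a2, hfa2, hga2⟩ := hgspec y2 h2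
        rw [hga1, hga2] at he
        rw [← hfa1, ← hfa2]; exact congrArg f (Subtype.ext he)
    have hsub1 : NS \ R ⊆ Y \ R := by
      intro z hz
      rcases Finset.mem_sdiff.mp hz with ⟨h1, h2⟩
      exact Finset.mem_sdiff.mpr ⟨Finset.mem_sdiff.mpr ⟨h1, hinter z h1⟩, h2⟩
    have c1 : (R ∪ NS).card = R.card + (NS \ R).card := by
      rw [← Finset.union_sdiff_self_eq_union, Finset.card_union_of_disjoint Finset.disjoint_sdiff]
    have c2 : R'.card + ((R ∪ NS) ∩ S).card = (R ∪ NS).card :=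
      Finset.card_sdiff_add_card_inter _ _
    have c3 : (S ∩ R).card ≤ ((R ∪ NS) ∩ S).card := by
      apply Finset.card_le_card
      intro x hx
      rcases Finset.mem_inter.mp hx with ⟨hxS, hxR⟩
      exact Finset.mem_inter.mpr ⟨Finset.mem_union_left _ hxR, hxS⟩
    have c4 : (NS \ R).card ≤ (Y \ R).card := Finset.card_le_card hsub1
    have c5 : tauNum G ≤ R'.card := tauNum_le G htrans
    omega
  · -- CASE 2 : ∃ x ∈ N(S) ∩ N(v)
    push_neg at hinter
    obtain ⟨x, hxNS, hxNV⟩ := hinter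
    obtain ⟨s', hs'S, hxNs'⟩ := Finset.mem_biUnion.mp hxNS
    have hs'x : G.Adj s' x := (G.mem_neighborFinset _ _).mp hxNs'
    have hvx : G.Adj v x := (G.mem_neighborFinset _ _).mp hxNV
    have hxnS : x ∉ S := hNvnotS x hxNV
    obtain ⟨f, hfinj, hfadj, hfY, hfsurj⟩ :=
      crux_matching G v S s' hs'S hIH' hind hvS hvnS hcon
    obtain ⟨R, hRcard, hvR, hxR, hRcov⟩ := crit_edge G hcrit hvx
    set R' := (R ∪ NS) \ S with hR'
    have htrans : IsTransversal G R' := by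
      intro a b hab
      by_cases haS : a ∈ S
      · refine Or.inr (Finset.mem_sdiff.mpr ⟨Finset.mem_union_right _
          (Finset.mem_biUnion.mpr ⟨a, haS, (G.mem_neighborFinset _ _).mpr hab⟩), ?_⟩)
        intro hbS
        exact hind a haS b hbS hab
      by_cases hbS : b ∈ S
      · refine Or.inl (Finset.mem_sdiff.mpr ⟨Finset.mem_union_right _
          (Finset.mem_biUnion.mpr ⟨b, hbS, (G.mem_neighborFinset _ _).mpr hab.symm⟩), haS⟩)
      by_cases hne : s(a, b) = s(v, x)
      · rcases Sym2.eq_iff.mp hne with ⟨rfl, rfl⟩ | ⟨rfl, rfl⟩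
        · exact Or.inr (Finset.mem_sdiff.mpr ⟨Finset.mem_union_right _ hxNS, hbS⟩)
        · exact Or.inl (Finset.mem_sdiff.mpr ⟨Finset.mem_union_right _ hxNS, haS⟩)
      · rcases hRcov hab hne with h | h
        · exact Or.inl (Finset.mem_sdiff.mpr ⟨Finset.mem_union_left _ h, haS⟩)
        · exact Or.inr (Finset.mem_sdiff.mpr ⟨Finset.mem_union_left _ h, hbS⟩)
    have hs'R : s' ∈ R := by
      have hne : s(s', x) ≠ s(v, x) := by
        intro he
        rcases Sym2.eq_iff.mp he with ⟨h1, h2⟩ | ⟨h1, h2⟩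
        · exact hvnS (h1 ▸ hs'S)
        · exact hxnS (h1 ▸ hs'S)
      rcases hRcov hs'x hne with h | h
      · exact h
      · exact absurd h hxR
    have hkey : (Y \ R).card ≤ ((S ∩ R).erase s').card := by
      set g : V → V := fun y => if h : ∃ a, f a = y then (Classical.choose h).1 else v with hg
      have hgspec : ∀ y ∈ Y \ R, ∃ a : {x // x ∈ S.erase s'}, f a = y ∧ g y = a.1 := by
        intro y hy
        have hex : ∃ a, f a = y := hfsurj y (Finset.mem_sdiff.mp hy).1
        exact ⟨Classical.choose hex, Classical.choose_spec hex, by rw [hg]; simp [hex]⟩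
      apply Finset.card_le_card_of_injOn g
      · intro y hy
        obtain ⟨a, hfa, hga⟩ := hgspec y hy
        rcases Finset.mem_sdiff.mp hy with ⟨hyY, hyR⟩
        have haS : a.1 ∈ S := Finset.mem_of_mem_erase a.2
        have hadj : G.Adj a.1 y := hfa ▸ hfadj a
        have hne : s(a.1, y) ≠ s(v, x) := by
          intro he
          rcases Sym2.eq_iff.mp he with ⟨h1, h2⟩ | ⟨h1, h2⟩
          · exact hvnS (h1 ▸ haS)
          · exact hxnS (h1 ▸ haS)
        rcases hRcov hadj hne with h | h
        · rw [hga]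
          exact Finset.mem_erase.mpr ⟨(Finset.mem_erase.mp a.2).1,
            Finset.mem_inter.mpr ⟨haS, h⟩⟩
        · exact absurd h hyR
      · intro y1 h1 y2 h2 he
        obtain ⟨a1, hfa1, hga1⟩ := hgspec y1 h1
        obtain ⟨a2, hfa2, hga2⟩ := hgspec y2 h2
        rw [hga1, hga2] at he
        rw [← hfa1, ← hfa2]; exact congrArg f (Subtype.ext he)
    have hsub1 : NS \ R ⊆ (Y \ R) ∪ {x} := by
      intro z hz
      rcases Finset.mem_sdiff.mp hz with ⟨h1, h2⟩
      by_cases hzNV : z ∈ NV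
      · have hadj : G.Adj v z := (G.mem_neighborFinset _ _).mp hzNV
        by_cases hne : s(v, z) = s(v, x)
        · rcases Sym2.eq_iff.mp hne with ⟨-, h4⟩ | ⟨h3, h4⟩
          · rw [h4]; exact Finset.mem_union_right _ (Finset.mem_singleton_self _)
          · exact absurd h3 (G.ne_of_adj hvx)
        · rcases hRcov hadj hne with h | h
          · exact absurd h hvR
          · exact absurd h h2
      · exact Finset.mem_union_left _
          (Finset.mem_sdiff.mpr ⟨Finset.mem_sdiff.mpr ⟨h1, hzNV⟩, h2⟩)
    have c1 : (R ∪ NS).card = R.card + (NS \ R).card := by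
      rw [← Finset.union_sdiff_self_eq_union, Finset.card_union_of_disjoint Finset.disjoint_sdiff]
    have c2 : R'.card + ((R ∪ NS) ∩ S).card = (R ∪ NS).card :=
      Finset.card_sdiff_add_card_inter _ _
    have c3 : (S ∩ R).card ≤ ((R ∪ NS) ∩ S).card := by
      apply Finset.card_le_card
      intro w hw
      rcases Finset.mem_inter.mp hw with ⟨hwS, hwR⟩
      exact Finset.mem_inter.mpr ⟨Finset.mem_union_left _ hwR, hwS⟩
    have c4 : (NS \ R).card ≤ (Y \ R).card + 1 := by
      calc (NS \ R).card ≤ ((Y \ R) ∪ {x}).card := Finset.card_le_card hsub1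
      _ ≤ (Y \ R).card + 1 := by
        refine (Finset.card_union_le _ _).trans ?_
        simp
    have c6 : ((S ∩ R).erase s').card + 1 = (S ∩ R).card := by
      have : s' ∈ S ∩ R := Finset.mem_inter.mpr ⟨hs'S, hs'R⟩
      have h7 := Finset.card_erase_of_mem this
      have : 0 < (S ∩ R).card := Finset.card_pos.mpr ⟨s', this⟩
      omega
    have c5 : tauNum G ≤ R'.card := tauNum_le G htrans
    omega

end cruxmain

section hajnal

variable (G : SimpleGraph V) [Fintype V] [DecidableEq V] [DecidableRel G.Adj]

lemma hajnal (hcrit : IsTauCritical G) (v : V) :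
    Fintype.card V + G.degree v ≤ 2 * tauNum G + 1 := by
  classical
  obtain ⟨u, hu⟩ := hcrit.1 v
  obtain ⟨R, hRcard, hvR, huR, hRcov⟩ := crit_edge G hcrit hu
  -- note: edge is (v, u); crit_edge gives v ∉ R, u ∉ R and coverage of all edges ≠ s(v,u)
  set I : Finset V := Finset.univ \ (insert u (insert v R)) with hI
  have hvu : v ≠ u := G.ne_of_adj hu
  have hmemI : ∀ a ∈ I, a ≠ u ∧ a ≠ v ∧ a ∉ R := by
    intro a ha
    rcases Finset.mem_sdiff.mp ha with ⟨-, h2⟩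
    simp only [Finset.mem_insert] at h2
    push_neg at h2
    exact ⟨h2.1, h2.2.1, h2.2.2⟩
  have hedge : ∀ ⦃a b : V⦄, G.Adj a b → a ≠ u → a ≠ v → (a ∈ R ∨ b ∈ R) := by
    intro a b hab hau hav
    apply hRcov hab
    intro he
    rcases Sym2.eq_iff.mp he with ⟨h1, -⟩ | ⟨h1, -⟩
    · exact hav h1
    · exact hau h1
  have hind : ∀ a ∈ I, ∀ b ∈ I, ¬ G.Adj a b := by
    intro a ha b hb hab
    obtain ⟨hau, hav, haR⟩ := hmemI a ha
    obtain ⟨-, -, hbR⟩ := hmemI b hb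
    rcases hedge hab hau hav with h | h
    · exact haR h
    · exact hbR h
  have hvSI : ∀ a ∈ I, ¬ G.Adj v a := by
    intro a ha hva
    obtain ⟨hau, hav, haR⟩ := hmemI a ha
    rcases hedge hva.symm hau hav with h | h
    · exact haR h
    · exact hvR h
  have hvnI : v ∉ I := by
    intro h
    exact (hmemI v h).2.1 rfl
  have hcrux := crux G hcrit v I hind hvSI hvnI
  -- N(I) \ N(v) ⊆ R \ ((G.neighborFinset v).erase u)
  have hYsub : (I.biUnion (fun a => G.neighborFinset a)) \ (G.neighborFinset v) ⊆ R \ ((G.neighborFinset v).erase u) := by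
    intro z hz
    rcases Finset.mem_sdiff.mp hz with ⟨h1, h2⟩
    obtain ⟨a, haI, hzN⟩ := Finset.mem_biUnion.mp h1
    obtain ⟨hau, hav, haR⟩ := hmemI a haI
    have hadj : G.Adj a z := (G.mem_neighborFinset _ _).mp hzN
    have hzR : z ∈ R := by
      rcases hedge hadj hau hav with h | h
      · exact absurd h haR
      · exact h
    exact Finset.mem_sdiff.mpr ⟨hzR, fun hc => h2 (Finset.mem_of_mem_erase hc)⟩
  have hNbrsub : (G.neighborFinset v).erase u ⊆ R := by
    intro z hz
    rcases Finset.mem_erase.mp hz with ⟨hzu, hzNbr⟩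
    have hadj : G.Adj v z := (G.mem_neighborFinset _ _).mp hzNbr
    rcases hedge hadj.symm hzu (Ne.symm (G.ne_of_adj hadj)) with h | h
    · exact h
    · exact absurd h hvR
  -- cardinalities
  have e1 : (insert u (insert v R)).card = R.card + 2 := by
    rw [Finset.card_insert_of_notMem (by simp [huR, hvu.symm]),
      Finset.card_insert_of_notMem hvR]
  have e2 : I.card = Fintype.card V - (R.card + 2) := by
    rw [hI, Finset.card_sdiff_of_subset (Finset.subset_univ _), Finset.card_univ, e1]
  have e3 : (insert u (insert v R)).card ≤ Fintype.card V := by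
    rw [← Finset.card_univ]
    exact Finset.card_le_card (Finset.subset_univ _)
  have e4 : (R \ ((G.neighborFinset v).erase u)).card = R.card - ((G.neighborFinset v).erase u).card :=
    Finset.card_sdiff_of_subset hNbrsub
  have e5 : ((G.neighborFinset v).erase u).card = G.degree v - 1 := by
    rw [Finset.card_erase_of_mem ((G.mem_neighborFinset _ _).mpr hu)]
    rfl
  have e6 : ((G.neighborFinset v).erase u).card ≤ R.card := Finset.card_le_card hNbrsub
  have e7 : 1 ≤ G.degree v := by
    have : u ∈ (G.neighborFinset v) := (G.mem_neighborFinset _ _).mpr hu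
    have := Finset.card_pos.mpr ⟨u, this⟩
    exact this
  have e8 : ((I.biUnion (fun a => G.neighborFinset a)) \ (G.neighborFinset v)).card ≤ (R \ ((G.neighborFinset v).erase u)).card :=
    Finset.card_le_card hYsub
  omega

end hajnal

section spectral

variable (G : SimpleGraph V) [Fintype V] [DecidableEq V] [DecidableRel G.Adj]

lemma spec_bound (w : V) (hw : ∀ z : V, G.degree z ≤ G.degree w) :
    signlessLapSpecRad G ≤ 2 * G.degree w := by
  classical
  apply Real.sSup_le
  · intro μ hμ
    set M : Matrix V V ℝ := Matrix.diagonal (fun v => (G.degree v : ℝ)) + G.adjMatrix ℝ with hM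
    have hμ' : Module.End.HasEigenvalue (Matrix.toLin' M) μ := by
      apply Module.End.HasEigenvalue.of_mem_spectrum
      have : Matrix.toLin' M = Matrix.toLinAlgEquiv' M := rfl
      rw [this, AlgEquiv.spectrum_eq]
      exact hμ
    obtain ⟨k, hk⟩ := eigenvalue_mem_ball hμ'
    have hdiag : M k k = G.degree k := by
      rw [hM, Matrix.add_apply, Matrix.diagonal_apply_eq]
      simp [SimpleGraph.adjMatrix_apply]
    have hsum : ∑ j ∈ Finset.univ.erase k, ‖M k j‖ = G.degree k := by
      have hterm : ∀ j ∈ Finset.univ.erase k, ‖M k j‖ = if G.Adj k j then (1:ℝ) else 0 := by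
        intro j hj
        rcases Finset.mem_erase.mp hj with ⟨hjk, -⟩
        rw [hM, Matrix.add_apply, Matrix.diagonal_apply_ne' _ hjk, SimpleGraph.adjMatrix_apply,
          zero_add]
        by_cases h : G.Adj k j <;> simp [h]
      rw [Finset.sum_congr rfl hterm,
        Finset.sum_erase (f := fun x => if G.Adj k x then (1:ℝ) else 0) Finset.univ (by simp),
        Finset.sum_boole]
      congr 1
      rw [← SimpleGraph.neighborFinset_eq_filter]
      rfl
    rw [Metric.mem_closedBall, Real.dist_eq] at hk
    have h2 := (abs_le.mp hk).2
    have h3 := hw k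
    have h4 : (G.degree k : ℝ) ≤ (G.degree w : ℝ) := by exact_mod_cast h3
    rw [hdiag, hsum] at h2
    linarith
  · positivity

end spectral

lemma two_mul_choose_two (m : ℕ) : 2 * ((m + 1).choose 2) = (m + 1) * m := by
  induction m with
  | zero => rfl
  | succ k ih =>
    have h : (k + 2).choose 2 = (k + 1).choose 1 + (k + 1).choose 2 := Nat.choose_succ_succ _ _
    rw [Nat.choose_one_right] at h
    calc 2 * ((k + 2).choose 2) = 2 * (k + 1) + 2 * ((k + 1).choose 2) := by rw [h]; ring
    _ = 2 * (k + 1) + (k + 1) * k := by rw [ih]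
    _ = (k + 2) * (k + 1) := by ring

lemma int_key (a b : ℤ) (ha : 0 ≤ a) (h : 0 ≤ b) : a * (2 * b + 1 - a) ≤ b * (b + 1) := by
  have hcc : 0 ≤ (b - a) * (b - a + 1) := by
    rcases le_or_gt 0 (b - a) with hc | hc
    · exact mul_nonneg hc (by linarith)
    · have h1 : b - a + 1 ≤ 0 := by omega
      nlinarith
  nlinarith

end aux

/-- For a nonnegative integer `r` and a τ-critical graph `G` with
`τ(G) = t ≥ r` and `|V(G)| = n`, we have `n·(r + q₁/4) ≤ (t+r+1 choose 2)`. -/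
theorem tau_critical_card_mul_r_add_quarter_q1_le (G : SimpleGraph V) [Fintype V]
    [DecidableEq V] [DecidableRel G.Adj] (t n r : ℕ) (hcrit : IsTauCritical G)
    (ht : tauNum G = t) (hn : Fintype.card V = n) (hr : r ≤ t) :
    (n : ℝ) * (r + signlessLapSpecRad G / 4) ≤ ((t + r + 1).choose 2 : ℝ) := by
  classical
  rcases isEmpty_or_nonempty V with hV | hV
  · have hn0 : n = 0 := by rw [← hn]; exact Fintype.card_eq_zero
    subst hn0
    simp only [Nat.cast_zero, zero_mul]
    exact Nat.cast_nonneg _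
  · obtain ⟨w, -, hw⟩ := Finset.exists_max_image Finset.univ (fun z => G.degree z)
      Finset.univ_nonempty
    have hHaj : Fintype.card V + G.degree w ≤ 2 * tauNum G + 1 := hajnal G hcrit w
    have hspec : signlessLapSpecRad G ≤ 2 * G.degree w :=
      spec_bound G w (fun z => hw z (Finset.mem_univ z))
    rw [ht, hn] at hHaj
    set q := signlessLapSpecRad G with hq
    set D := G.degree w with hD
    have hZ : (n : ℤ) * (4 * r + 2 * D) ≤ 2 * (((t:ℤ) + r + 1) * ((t:ℤ) + r)) := by
      have h1 : (n:ℤ) + D ≤ 2 * t + 1 := by exact_mod_cast hHaj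
      have h2 : (n:ℤ) * (4*r + 2*D) ≤ (n:ℤ) * (4*r + 2*(2*t+1-n)) := by
        apply mul_le_mul_of_nonneg_left _ (by positivity)
        linarith
      have h3 : (n:ℤ)*(4*r+2*(2*t+1-n)) = 2 * ((n:ℤ) * (2*((t:ℤ)+r)+1-n)) := by ring
      have h4 := int_key (n:ℤ) ((t:ℤ)+r) (by positivity) (by positivity)
      linarith
    have hR : (n : ℝ) * (4 * r + 2 * D) ≤ 2 * (((t:ℝ) + r + 1) * ((t:ℝ) + r)) := by
      exact_mod_cast hZ
    have hch : 2 * (((t + r + 1).choose 2 : ℕ) : ℝ) = ((t:ℝ) + r + 1) * ((t:ℝ) + r) := by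
      have h5 := two_mul_choose_two (t + r)
      have h6 : ((2 * ((t+r+1).choose 2) : ℕ) : ℝ) = (((t+r+1) * (t+r) : ℕ) : ℝ) := by
        rw [h5]
      push_cast at h6
      linarith
    have hmul : (n : ℝ) * (4*(r:ℝ) + q) ≤ (n:ℝ) * (4*(r:ℝ) + 2*D) := by
      apply mul_le_mul_of_nonneg_left _ (by positivity)
      linarith
    have e : (n:ℝ) * ((r:ℝ) + q/4) * 4 = (n:ℝ) * (4*(r:ℝ) + q) := by ring
    linarith
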